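/- Let q̂, q̂' be positive integers and m, m' integers coprime to q̂, q̂' respectively. Define 𝔠 = Σ_{β mod q̂q̂'} S(\bar m, β; q̂) S(\bar{m'}, β; q̂') e(β n₂/(q̂q̂')). Then |𝔠| ≤ q̂ q̂' · gcd(q̂, q̂', n₂). Moreover, if n₂ = 0 then 𝔠 = 0 unless q̂ = q̂', in which case |𝔠| ≤ q̂ q̂' |c_{q̂}(m − m')|, where c_q(n) denotes the Ramanujan sum. -/

import Mathlib

open scoped Classical

noncomputable def e2 (x : ℝ) : ℂ := Complex.exp (2 * Real.pi * Complex.I * x)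

/-- The Kloosterman sum `S(a,b;c) = Σ*_{α mod c} e((aα + b ᾱ)/c)`. -/
noncomputable def kloos (a b : ℤ) (c : ℕ) : ℂ :=
  ∑ α ∈ Finset.range c, if Nat.Coprime α c then
    e2 (((a * α + b * ((((α : ZMod c)⁻¹).val : ℕ) : ℤ) : ℤ) : ℝ) / (c : ℝ)) else 0

/-- The Ramanujan sum `c_q(n) = Σ*_{α mod q} e(αn/q)`. -/
noncomputable def ramanujanSum (q : ℕ) (n : ℤ) : ℂ :=
  ∑ α ∈ Finset.range q, if Nat.Coprime α q then e2 ((((α : ℤ) * n : ℤ) : ℝ) / (q : ℝ)) else 0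

/-- `𝔠 = Σ_{β mod q̂ q̂'} S(m̄, β; q̂) S(m̄', β; q̂') e(β n₂/(q̂ q̂'))`. -/
noncomputable def charSum (qh qh' : ℕ) (m m' n₂ : ℤ) : ℂ :=
  ∑ β ∈ Finset.range (qh * qh'),
    kloos (((m : ZMod qh)⁻¹).val : ℤ) (β : ℤ) qh *
    kloos (((m' : ZMod qh')⁻¹).val : ℤ) (β : ℤ) qh' *
    e2 ((((β : ℤ) * n₂ : ℤ) : ℝ) / ((qh * qh' : ℕ) : ℝ))




lemma e2_add (x y : ℝ) : e2 (x + y) = e2 x * e2 y := by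
  simp [e2, mul_add, Complex.exp_add]

lemma e2_int (k : ℤ) : e2 k = 1 := by
  simp only [e2]
  rw [← Complex.exp_int_mul_two_pi_mul_I k]
  congr 1; push_cast; ring

lemma e2_abs (x : ℝ) : ‖e2 x‖ = 1 := by
  simp only [e2]
  rw [show (2 * Real.pi * Complex.I * x : ℂ) = (2 * Real.pi * x : ℝ) * Complex.I by push_cast; ring]
  exact Complex.norm_exp_ofReal_mul_I _

lemma e2_pow (x : ℝ) (n : ℕ) : e2 x ^ n = e2 (n * x) := by
  simp only [e2, ← Complex.exp_nat_mul]
  congr 1; push_cast; ring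

lemma e2_congr {q : ℕ} (hq : 0 < q) {a b : ℤ} (h : (q : ℤ) ∣ a - b) :
    e2 ((a : ℝ) / q) = e2 ((b : ℝ) / q) := by
  obtain ⟨t, ht⟩ := h
  have ha : (a : ℝ) = b + q * t := by
    have : (a : ℝ) - b = q * t := by exact_mod_cast congrArg (Int.cast : ℤ → ℝ) ht
    linarith
  have hq0 : (q : ℝ) ≠ 0 := by positivity
  rw [ha, show ((b : ℝ) + q * t) / q = b / q + t by field_simp, e2_add, e2_int, mul_one]

lemma sum_e2 (Q : ℕ) (hQ : 0 < Q) (k : ℤ) :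
    ∑ β ∈ Finset.range Q, e2 (((β : ℤ) * k : ℤ) / (Q : ℝ)) =
      if (Q : ℤ) ∣ k then (Q : ℂ) else 0 := by
  have hQ0 : (Q : ℝ) ≠ 0 := by positivity
  by_cases h : (Q : ℤ) ∣ k
  · rw [if_pos h]
    obtain ⟨t, ht⟩ := h
    have : ∀ β ∈ Finset.range Q, e2 (((β : ℤ) * k : ℤ) / (Q : ℝ)) = 1 := by
      intro β _
      have : (((β : ℤ) * k : ℤ) : ℝ) / Q = ((β * t : ℤ) : ℝ) := by
        subst ht; push_cast; field_simp
      rw [this, e2_int]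
    rw [Finset.sum_congr rfl this]
    simp
  · rw [if_neg h]
    have hterm : ∀ β ∈ Finset.range Q, e2 (((β : ℤ) * k : ℤ) / (Q : ℝ)) =
        e2 ((k : ℝ) / Q) ^ β := by
      intro β _
      rw [e2_pow]
      congr 1
      push_cast; ring
    rw [Finset.sum_congr rfl hterm]
    have hne : e2 ((k : ℝ) / Q) ≠ 1 := by
      intro hone
      apply h
      simp only [e2] at hone
      rw [Complex.exp_eq_one_iff] at hone
      obtain ⟨n, hn⟩ := hone
      have h2 : (2 * (Real.pi : ℂ) * Complex.I) ≠ 0 := by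
        simp [Real.pi_ne_zero, Complex.I_ne_zero]
      push_cast at hn
      have hQC : ((Q:ℕ):ℂ) ≠ 0 := by exact_mod_cast hQ0
      field_simp at hn
      have hk : ((k : ℤ) : ℂ) = (n : ℂ) * ((Q : ℕ) : ℂ) :=
        mul_left_cancel₀ h2 (by linear_combination (2 * (Real.pi : ℂ) * Complex.I) * hn)
      have : (k : ℤ) = n * Q := by exact_mod_cast hk
      exact ⟨n, by linarith⟩
    rw [geom_sum_eq hne]
    have : e2 ((k : ℝ) / Q) ^ Q = 1 := by
      rw [e2_pow]
      have : (Q : ℝ) * ((k : ℝ) / Q) = (k : ℝ) := by field_simp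
      rw [this]; exact e2_int k
    rw [this, sub_self, zero_div]
def iv (c : ℕ) (α : ℕ) : ℤ := ((((α : ZMod c)⁻¹).val : ℕ) : ℤ)

lemma isUnit_int_cast {q : ℕ} {m : ℤ} (hm : IsCoprime m (q : ℤ)) : IsUnit ((m : ZMod q)) := by
  obtain ⟨u, v, huv⟩ := hm
  have h1 : (u : ZMod q) * (m : ZMod q) = 1 := by
    have h := congrArg (Int.cast : ℤ → ZMod q) huv
    push_cast at h
    simpa using h
  exact IsUnit.of_mul_eq_one _ (by rw [mul_comm]; exact h1)

lemma inv_unit_isUnit {q : ℕ} {a : ZMod q} (h : IsUnit a) : IsUnit a⁻¹ :=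
  IsUnit.of_mul_eq_one _ (ZMod.inv_mul_of_unit a h)

lemma coprime_val_of_isUnit {q : ℕ} {a : ZMod q} (h : IsUnit a) : Nat.Coprime a.val q := by
  have := ZMod.val_coe_unit_coprime h.unit
  rwa [IsUnit.unit_spec] at this

lemma iv_coprime {c : ℕ} [NeZero c] {α : ℕ} (h : Nat.Coprime α c) :
    Nat.Coprime ((α : ZMod c)⁻¹).val c :=
  coprime_val_of_isUnit (inv_unit_isUnit ((ZMod.isUnit_iff_coprime α c).2 h))

lemma iv_inj {c : ℕ} (hc : 0 < c) {α β : ℕ} (hα : α < c) (hβ : β < c)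
    (hcα : Nat.Coprime α c) (hcβ : Nat.Coprime β c)
    (h : ((α : ZMod c)⁻¹).val = ((β : ZMod c)⁻¹).val) : α = β := by
  haveI : NeZero c := ⟨hc.ne'⟩
  have h2 : (α : ZMod c)⁻¹ = (β : ZMod c)⁻¹ := by
    rw [← ZMod.natCast_zmod_val ((α : ZMod c)⁻¹), h, ZMod.natCast_zmod_val]
  have ha := ZMod.mul_inv_of_unit _ ((ZMod.isUnit_iff_coprime α c).2 hcα)
  have hb := ZMod.inv_mul_of_unit _ ((ZMod.isUnit_iff_coprime β c).2 hcβ)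
  have h3 : (α : ZMod c) = (β : ZMod c) := by
    calc (α : ZMod c) = (α : ZMod c) * ((β : ZMod c)⁻¹ * β) := by rw [hb, mul_one]
    _ = ((α : ZMod c) * (α : ZMod c)⁻¹) * β := by rw [← h2]; ring
    _ = β := by rw [ha, one_mul]
  have h4 := congrArg ZMod.val h3
  rwa [ZMod.val_cast_of_lt hα, ZMod.val_cast_of_lt hβ] at h4

lemma neg_inv_eq {q : ℕ} {x : ZMod q} (hx : IsUnit x) : (-x)⁻¹ = -x⁻¹ := by
  have h1 : (-x)⁻¹ * (-x) = 1 := ZMod.inv_mul_of_unit _ hx.neg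
  have h2 : x * x⁻¹ = 1 := ZMod.mul_inv_of_unit _ hx
  calc (-x)⁻¹ = (-x)⁻¹ * (x * x⁻¹) := by rw [h2, mul_one]
  _ = -((-x)⁻¹ * (-x)) * x⁻¹ := by ring
  _ = -x⁻¹ := by rw [h1]; ring

lemma card_bound (qh qh' : ℕ) (hq : 0 < qh) (hq' : 0 < qh') (n₂ : ℤ) :
    ((Finset.range qh ×ˢ Finset.range qh').filter fun p =>
        Nat.Coprime p.1 qh ∧ Nat.Coprime p.2 qh' ∧
        ((qh * qh' : ℕ) : ℤ) ∣ (iv qh p.1 * qh' + iv qh' p.2 * qh + n₂)).card ≤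
      Nat.gcd (Nat.gcd qh qh') n₂.natAbs := by
  haveI : NeZero qh := ⟨hq.ne'⟩
  haveI : NeZero qh' := ⟨hq'.ne'⟩
  set S := (Finset.range qh ×ˢ Finset.range qh').filter fun p =>
        Nat.Coprime p.1 qh ∧ Nat.Coprime p.2 qh' ∧
        ((qh * qh' : ℕ) : ℤ) ∣ (iv qh p.1 * qh' + iv qh' p.2 * qh + n₂) with hS
  rcases S.eq_empty_or_nonempty with h | ⟨p₀, hp₀⟩
  · simp [h]
  set d := Nat.gcd qh qh' with hd
  have hd0 : 0 < d := Nat.gcd_pos_of_pos_left _ hq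
  have hdqh : d ∣ qh := Nat.gcd_dvd_left _ _
  have hdqh' : d ∣ qh' := Nat.gcd_dvd_right _ _
  -- membership unfolding helper
  have hmem : ∀ p ∈ S, p.1 < qh ∧ p.2 < qh' ∧ Nat.Coprime p.1 qh ∧ Nat.Coprime p.2 qh' ∧
      ((qh * qh' : ℕ) : ℤ) ∣ (iv qh p.1 * qh' + iv qh' p.2 * qh + n₂) := by
    intro p hp
    rw [hS, Finset.mem_filter, Finset.mem_product, Finset.mem_range, Finset.mem_range] at hp
    exact ⟨hp.1.1, hp.1.2, hp.2⟩
  -- (qh:ℤ) ∣ iv qh p.1 * qh' + n₂ for p ∈ S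
  have key : ∀ p ∈ S, (qh : ℤ) ∣ iv qh p.1 * qh' + n₂ := by
    intro p hp
    obtain ⟨_, _, _, _, hdvd⟩ := hmem p hp
    have h1 : (qh : ℤ) ∣ iv qh p.1 * qh' + iv qh' p.2 * qh + n₂ :=
      dvd_trans (by exact_mod_cast Int.natCast_dvd_natCast.2 (dvd_mul_right qh qh')) hdvd
    have h2 : (qh : ℤ) ∣ iv qh' p.2 * qh := ⟨iv qh' p.2, mul_comm _ _⟩
    have h3 := dvd_sub h1 h2
    rwa [show iv qh p.1 * qh' + iv qh' p.2 * qh + n₂ - iv qh' p.2 * qh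
        = iv qh p.1 * qh' + n₂ by ring] at h3
  -- d ∣ n₂
  have hdn : (d : ℤ) ∣ n₂ := by
    have h1 := key p₀ hp₀
    have h2 : (d : ℤ) ∣ iv qh p₀.1 * qh' + n₂ :=
      dvd_trans (Int.natCast_dvd_natCast.2 hdqh) h1
    have h3 : (d : ℤ) ∣ iv qh p₀.1 * qh' := Dvd.dvd.mul_left (Int.natCast_dvd_natCast.2 hdqh') _
    have h4 := dvd_sub h2 h3
    rwa [add_sub_cancel_left] at h4
  have hdg : Nat.gcd d n₂.natAbs = d :=
    Nat.dvd_antisymm (Nat.gcd_dvd_left _ _)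
      (Nat.dvd_gcd dvd_rfl (by rwa [← Int.natAbs_natCast d, Int.natAbs_dvd_natAbs]))
  rw [hdg]
  -- now show S.card ≤ d via injection into range d
  set e := qh / d with he
  have hed : e * d = qh := Nat.div_mul_cancel hdqh
  have he0 : 0 < e := by
    rcases Nat.eq_zero_or_pos e with h0 | h0
    · rw [h0, zero_mul] at hed; omega
    · exact h0
  have hcount := Finset.card_le_card_of_injOn
    (fun p : ℕ × ℕ => ((p.1 : ZMod qh)⁻¹).val / e)
    (s := S) (t := Finset.range d) ?_ ?_
  · simpa using hcount
  · intro p hp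
    rw [Finset.mem_coe]
    beta_reduce
    rw [Finset.mem_range, Nat.div_lt_iff_lt_mul he0]
    calc ((p.1 : ZMod qh)⁻¹).val < qh := ZMod.val_lt _
    _ = d * e := by rw [← hed]; ring
  · intro p hp p' hp' hfe
    simp only at hfe
    obtain ⟨hp1, hp2, hc1, hc2, hdvd⟩ := hmem p hp
    obtain ⟨hp1', hp2', hc1', hc2', hdvd'⟩ := hmem p' hp'
    set y := ((p.1 : ZMod qh)⁻¹).val with hy
    set y' := ((p'.1 : ZMod qh)⁻¹).val with hy'
    -- e ∣ y - y'
    have hsub : (qh : ℤ) ∣ ((y : ℤ) - y') * qh' := by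
      have := dvd_sub (key p hp) (key p' hp')
      rwa [show iv qh p.1 * qh' + n₂ - (iv qh p'.1 * qh' + n₂)
          = ((iv qh p.1 : ℤ) - iv qh p'.1) * qh' by ring] at this
    set e' := qh' / d with he'
    have hed' : e' * d = qh' := Nat.div_mul_cancel hdqh'
    have co : Nat.Coprime e e' := Nat.coprime_div_gcd_div_gcd hd0
    have hee' : (e : ℤ) ∣ ((y : ℤ) - y') * e' := by
      have h5 : (e : ℤ) * d ∣ (((y : ℤ) - y') * e') * d := by
        have : (((y : ℤ) - y') * e') * d = ((y : ℤ) - y') * qh' := by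
          rw [← hed']; push_cast; ring
        rw [this]
        calc (e : ℤ) * d = (qh : ℤ) := by rw [← hed]; push_cast; ring
        _ ∣ _ := hsub
      exact (mul_dvd_mul_iff_right (by exact_mod_cast hd0.ne' : (d : ℤ) ≠ 0)).1 h5
    have heyy : (e : ℤ) ∣ (y : ℤ) - y' :=
      (Nat.isCoprime_iff_coprime.mpr co).dvd_of_dvd_mul_right hee'
    have hyy : y = y' := by
      have hmod : y' ≡ y [MOD e] := Nat.modEq_iff_dvd.2 (by exact_mod_cast heyy)
      have h6 := Nat.div_add_mod y e
      have h7 := Nat.div_add_mod y' e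
      have h10 : y' % e = y % e := hmod
      have h11 : y / e = y' / e := hfe
      calc y = e * (y / e) + y % e := h6.symm
      _ = e * (y' / e) + y' % e := by rw [h11, h10]
      _ = y' := h7
    have hfst : p.1 = p'.1 := iv_inj hq hp1 hp1' hc1 hc1' (by rw [← hy, ← hy', hyy])
    -- second component
    have hsnd : p.2 = p'.2 := by
      set z := ((p.2 : ZMod qh')⁻¹).val with hz
      set z' := ((p'.2 : ZMod qh')⁻¹).val with hz'
      have hsub2 : ((qh' : ℤ) * qh) ∣ ((z : ℤ) - z') * qh := by
        have h8 := dvd_sub hdvd hdvd'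
        rw [hfst] at h8
        rw [show iv qh p'.1 * qh' + iv qh' p.2 * qh + n₂ - (iv qh p'.1 * qh' + iv qh' p'.2 * qh + n₂)
            = ((iv qh' p.2 : ℤ) - iv qh' p'.2) * qh by ring] at h8
        have : ((qh * qh' : ℕ) : ℤ) = (qh' : ℤ) * qh := by push_cast; ring
        rwa [this] at h8
      have h9 : (qh' : ℤ) ∣ (z : ℤ) - z' :=
        (mul_dvd_mul_iff_right (by exact_mod_cast hq.ne' : (qh : ℤ) ≠ 0)).1 hsub2
      have hmod : z' ≡ z [MOD qh'] := Nat.modEq_iff_dvd.2 (by exact_mod_cast h9)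
      have hzz : z = z' := by
        have := Nat.ModEq.symm hmod
        unfold Nat.ModEq at this
        rwa [Nat.mod_eq_of_lt (ZMod.val_lt _), Nat.mod_eq_of_lt (ZMod.val_lt _)] at this
      exact iv_inj hq' hp2 hp2' hc2 hc2' hzz
    exact Prod.ext hfst hsnd
lemma charSum_eq (qh qh' : ℕ) (hq : 0 < qh) (hq' : 0 < qh') (m m' n₂ : ℤ) :
    charSum qh qh' m m' n₂ =
      ∑ α ∈ Finset.range qh, ∑ α' ∈ Finset.range qh',
        if Nat.Coprime α qh ∧ Nat.Coprime α' qh' ∧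
            ((qh * qh' : ℕ) : ℤ) ∣ (iv qh α * qh' + iv qh' α' * qh + n₂)
        then ((qh * qh' : ℕ) : ℂ) *
            e2 ((((((m : ZMod qh)⁻¹).val : ℤ) * α : ℤ) : ℝ) / (qh : ℝ)) *
            e2 ((((((m' : ZMod qh')⁻¹).val : ℤ) * α' : ℤ) : ℝ) / (qh' : ℝ))
        else 0 := by
  set M : ℤ := (((m : ZMod qh)⁻¹).val : ℤ) with hM
  set M' : ℤ := (((m' : ZMod qh')⁻¹).val : ℤ) with hM'
  have step1 : charSum qh qh' m m' n₂ =
      ∑ β ∈ Finset.range (qh * qh'), ∑ α ∈ Finset.range qh, ∑ α' ∈ Finset.range qh',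
        ((if Nat.Coprime α qh then e2 (((M * α + β * iv qh α : ℤ) : ℝ) / (qh : ℝ)) else 0) *
         (if Nat.Coprime α' qh' then e2 (((M' * α' + β * iv qh' α' : ℤ) : ℝ) / (qh' : ℝ)) else 0) *
         e2 ((((β : ℤ) * n₂ : ℤ) : ℝ) / ((qh * qh' : ℕ) : ℝ))) := by
    refine Finset.sum_congr rfl fun β _ => ?_
    rw [kloos, kloos, Finset.sum_mul_sum]
    rw [Finset.sum_mul]
    refine Finset.sum_congr rfl fun α _ => ?_
    rw [Finset.sum_mul]
    refine Finset.sum_congr rfl fun α' _ => ?_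
    simp only [iv, ite_mul, zero_mul, hM, hM']
  rw [step1, Finset.sum_comm]
  refine Finset.sum_congr rfl fun α hα => ?_
  rw [Finset.sum_comm]
  refine Finset.sum_congr rfl fun α' hα' => ?_
  by_cases hcα : Nat.Coprime α qh
  · by_cases hcα' : Nat.Coprime α' qh'
    · simp only [if_pos hcα, if_pos hcα', hcα, hcα', true_and]
      have key : ∀ β ∈ Finset.range (qh * qh'),
          e2 (((M * α + β * iv qh α : ℤ) : ℝ) / (qh : ℝ)) *
          e2 (((M' * α' + β * iv qh' α' : ℤ) : ℝ) / (qh' : ℝ)) *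
          e2 ((((β : ℤ) * n₂ : ℤ) : ℝ) / ((qh * qh' : ℕ) : ℝ)) =
          (e2 (((M * α : ℤ) : ℝ) / (qh : ℝ)) * e2 (((M' * α' : ℤ) : ℝ) / (qh' : ℝ))) *
          e2 ((((β : ℤ) * (iv qh α * qh' + iv qh' α' * qh + n₂) : ℤ) : ℝ) / ((qh * qh' : ℕ) : ℝ)) := by
        intro β _
        rw [← e2_add, ← e2_add, ← e2_add, ← e2_add]
        congr 1
        have h1 : (qh : ℝ) ≠ 0 := by positivity
        have h2 : (qh' : ℝ) ≠ 0 := by positivity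
        push_cast
        field_simp
        ring
      rw [Finset.sum_congr rfl key, ← Finset.mul_sum,
        sum_e2 (qh * qh') (Nat.mul_pos hq hq') (iv qh α * qh' + iv qh' α' * qh + n₂)]
      by_cases hdvd : ((qh * qh' : ℕ) : ℤ) ∣ (iv qh α * qh' + iv qh' α' * qh + n₂)
      · rw [if_pos hdvd, if_pos (⟨hcα, hcα', hdvd⟩ : _ ∧ _ ∧ _)]; ring
      · rw [if_neg hdvd, if_neg (fun h => hdvd h.2.2), mul_zero]
    · simp only [if_neg hcα', hcα', false_and, and_false, if_neg, mul_zero, zero_mul,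
        Finset.sum_const_zero]
      simp
  · simp only [if_neg hcα, hcα, false_and, if_neg, mul_zero, zero_mul, Finset.sum_const_zero]
    simp
lemma ram_congr (q : ℕ) (hq : 0 < q) {n n' : ℤ} (h : (q : ℤ) ∣ n - n') :
    ramanujanSum q n = ramanujanSum q n' := by
  unfold ramanujanSum
  refine Finset.sum_congr rfl fun α _ => ?_
  split_ifs with hc
  · refine e2_congr hq ?_
    rw [show (α : ℤ) * n - α * n' = α * (n - n') by ring]
    exact Dvd.dvd.mul_left h α
  · rfl

lemma ram_unit (q : ℕ) (hq : 0 < q) (u n : ℤ) (hu : IsUnit ((u : ZMod q))) :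
    ramanujanSum q (u * n) = ramanujanSum q n := by
  haveI : NeZero q := ⟨hq.ne'⟩
  unfold ramanujanSum
  rw [← Finset.sum_filter, ← Finset.sum_filter]
  refine Finset.sum_bij' (i := fun α _ => ((u : ZMod q) * (α : ZMod q)).val)
    (j := fun β _ => (((u : ZMod q))⁻¹ * (β : ZMod q)).val) ?_ ?_ ?_ ?_ ?_
  · intro α hα
    rw [Finset.mem_filter, Finset.mem_range] at hα ⊢
    refine ⟨ZMod.val_lt _, ?_⟩
    exact coprime_val_of_isUnit (hu.mul ((ZMod.isUnit_iff_coprime α q).2 hα.2))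
  · intro β hβ
    rw [Finset.mem_filter, Finset.mem_range] at hβ ⊢
    refine ⟨ZMod.val_lt _, ?_⟩
    exact coprime_val_of_isUnit ((inv_unit_isUnit hu).mul ((ZMod.isUnit_iff_coprime β q).2 hβ.2))
  · intro α hα
    rw [Finset.mem_filter, Finset.mem_range] at hα
    beta_reduce
    rw [ZMod.natCast_zmod_val, ← mul_assoc, ZMod.inv_mul_of_unit _ hu, one_mul,
      ZMod.val_cast_of_lt hα.1]
  · intro β hβ
    rw [Finset.mem_filter, Finset.mem_range] at hβ
    beta_reduce
    rw [ZMod.natCast_zmod_val, ← mul_assoc, ZMod.mul_inv_of_unit _ hu, one_mul,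
      ZMod.val_cast_of_lt hβ.1]
  · intro α hα
    refine e2_congr hq ?_
    rw [show (α : ℤ) * (u * n) - (((u : ZMod q) * (α : ZMod q)).val : ℤ) * n
        = ((α : ℤ) * u - (((u : ZMod q) * (α : ZMod q)).val : ℤ)) * n by ring]
    refine Dvd.dvd.mul_right ?_ n
    rw [← ZMod.intCast_zmod_eq_zero_iff_dvd]
    push_cast
    rw [ZMod.natCast_zmod_val]
    ring
lemma charSum_diag (q : ℕ) (hq : 0 < q) (m m' : ℤ) :
    charSum q q m m' 0 = ((q * q : ℕ) : ℂ) *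
      ramanujanSum q ((((m : ZMod q)⁻¹).val : ℤ) - (((m' : ZMod q)⁻¹).val : ℤ)) := by
  haveI : NeZero q := ⟨hq.ne'⟩
  set M : ℤ := (((m : ZMod q)⁻¹).val : ℤ) with hM
  set M' : ℤ := (((m' : ZMod q)⁻¹).val : ℤ) with hM'
  rw [charSum_eq q q hq hq m m' 0, ramanujanSum, Finset.mul_sum]
  refine Finset.sum_congr rfl fun α hα => ?_
  rw [Finset.mem_range] at hα
  -- simplify the divisibility condition
  have hqz : (q : ℤ) ≠ 0 := by exact_mod_cast hq.ne'
  have hcond : ∀ α' : ℕ, (((q * q : ℕ) : ℤ) ∣ (iv q α * q + iv q α' * q + 0)) ↔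
      ((q : ℤ) ∣ iv q α + iv q α') := by
    intro α'
    rw [add_zero, ← add_mul, show ((q * q : ℕ) : ℤ) = (q : ℤ) * q by push_cast; ring]
    exact mul_dvd_mul_iff_right hqz
  by_cases hc : Nat.Coprime α q
  · have hu : IsUnit ((α : ℕ) : ZMod q) := (ZMod.isUnit_iff_coprime α q).2 hc
    set α₀ : ℕ := (-((α : ℕ) : ZMod q)).val with hα₀
    have hα₀lt : α₀ < q := ZMod.val_lt _
    have hcast : ((α₀ : ℕ) : ZMod q) = -((α : ℕ) : ZMod q) := ZMod.natCast_zmod_val _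
    have hc₀ : Nat.Coprime α₀ q := coprime_val_of_isUnit hu.neg
    have hiv₀ : ((iv q α₀ : ℤ) : ZMod q) = -(((α : ℕ) : ZMod q))⁻¹ := by
      rw [iv]
      push_cast
      rw [ZMod.natCast_zmod_val, hcast, neg_inv_eq hu]
    have hivsum : (q : ℤ) ∣ iv q α + iv q α₀ := by
      rw [← ZMod.intCast_zmod_eq_zero_iff_dvd]
      push_cast
      rw [hiv₀, iv]
      push_cast
      rw [ZMod.natCast_zmod_val]
      ring
    -- the inner sum reduces to the single term α' = α₀
    rw [Finset.sum_eq_single_of_mem α₀ (Finset.mem_range.2 hα₀lt) ?other]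
    case other =>
      intro α' hα' hne
      rw [if_neg]
      rintro ⟨_, hc', hdvd⟩
      apply hne
      rw [hcond α'] at hdvd
      -- iv q α' ≡ -iv q α  ⟹  (α')⁻¹ = -(α)⁻¹  ⟹ α' = α₀
      have h2 : ((α' : ℕ) : ZMod q)⁻¹ = -(((α : ℕ) : ZMod q))⁻¹ := by
        have h0 : ((iv q α + iv q α' : ℤ) : ZMod q) = 0 := by
          rw [ZMod.intCast_zmod_eq_zero_iff_dvd]; exact hdvd
        rw [iv, iv] at h0
        push_cast at h0
        rw [ZMod.natCast_zmod_val, ZMod.natCast_zmod_val] at h0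
        linear_combination h0
      -- conclude α' = -α in ZMod q
      have hu' : IsUnit ((α' : ℕ) : ZMod q) := (ZMod.isUnit_iff_coprime α' q).2 hc'
      have h3 : ((α' : ℕ) : ZMod q) = -((α : ℕ) : ZMod q) := by
        have ha := ZMod.mul_inv_of_unit _ hu'
        rw [h2, ← neg_inv_eq hu] at ha
        have hb := ZMod.mul_inv_of_unit _ hu.neg
        calc ((α' : ℕ) : ZMod q) = α' * ((-((α : ℕ) : ZMod q)) * (-((α : ℕ) : ZMod q))⁻¹) := by
              rw [hb, mul_one]
        _ = (α' * (-((α : ℕ) : ZMod q))⁻¹) * (-((α : ℕ) : ZMod q)) := by ring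
        _ = -((α : ℕ) : ZMod q) := by rw [ha, one_mul]
      have h4 := congrArg ZMod.val h3
      rwa [ZMod.val_cast_of_lt (Finset.mem_range.1 hα')] at h4
    · rw [if_pos ⟨hc, hc₀, (hcond α₀).2 hivsum⟩, if_pos hc, mul_assoc, ← e2_add]
      congr 1
      rw [show ((M * α : ℤ) : ℝ) / q + ((M' * α₀ : ℤ) : ℝ) / q
          = (((M * α + M' * α₀ : ℤ) : ℝ)) / q by push_cast; ring]
      refine e2_congr hq ?_
      rw [show M * α + M' * α₀ - α * (M - M') = M' * (α₀ + α) by ring]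
      refine Dvd.dvd.mul_left ?_ M'
      rw [← ZMod.intCast_zmod_eq_zero_iff_dvd]
      push_cast
      rw [hcast]
      ring
  · -- α not coprime: both sides vanish
    rw [if_neg hc, mul_zero]
    refine Finset.sum_eq_zero fun α' _ => ?_
    rw [if_neg]
    rintro ⟨hcc, _, _⟩
    exact hc hcc

lemma ram_shift (q : ℕ) (hq : 0 < q) (m m' : ℤ)
    (hm : IsCoprime m (q : ℤ)) (hm' : IsCoprime m' (q : ℤ)) :
    ramanujanSum q ((((m : ZMod q)⁻¹).val : ℤ) - (((m' : ZMod q)⁻¹).val : ℤ))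
      = ramanujanSum q (m - m') := by
  haveI : NeZero q := ⟨hq.ne'⟩
  set M : ℤ := (((m : ZMod q)⁻¹).val : ℤ) with hMdef
  set M' : ℤ := (((m' : ZMod q)⁻¹).val : ℤ) with hM'def
  have hum : IsUnit ((m : ZMod q)) := isUnit_int_cast hm
  have hum' : IsUnit ((m' : ZMod q)) := isUnit_int_cast hm'
  have hMc : ((M : ℤ) : ZMod q) = (m : ZMod q)⁻¹ := by
    rw [hMdef]; push_cast; exact ZMod.natCast_zmod_val _
  have hM'c : ((M' : ℤ) : ZMod q) = (m' : ZMod q)⁻¹ := by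
    rw [hM'def]; push_cast; exact ZMod.natCast_zmod_val _
  have key : (q : ℤ) ∣ (M - M') - (-(M * M')) * (m - m') := by
    rw [← ZMod.intCast_zmod_eq_zero_iff_dvd]
    push_cast
    rw [hMc, hM'c]
    linear_combination ((m' : ZMod q)⁻¹) * ZMod.mul_inv_of_unit _ hum
      - ((m : ZMod q)⁻¹) * ZMod.mul_inv_of_unit _ hum'
  have hcast2 : (((-(M * M')) : ℤ) : ZMod q) = -((m : ZMod q)⁻¹ * (m' : ZMod q)⁻¹) := by
    push_cast; rw [hMc, hM'c]
  have hu2 : IsUnit (((-(M * M') : ℤ)) : ZMod q) := by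
    rw [hcast2]
    exact ((inv_unit_isUnit hum).mul (inv_unit_isUnit hum')).neg
  calc ramanujanSum q (M - M') = ramanujanSum q ((-(M * M')) * (m - m')) := ram_congr q hq key
  _ = ramanujanSum q (m - m') := ram_unit q hq _ _ hu2

lemma charSum_offdiag (qh qh' : ℕ) (hq : 0 < qh) (hq' : 0 < qh') (m m' : ℤ)
    (hne : qh ≠ qh') : charSum qh qh' m m' 0 = 0 := by
  haveI : NeZero qh := ⟨hq.ne'⟩
  haveI : NeZero qh' := ⟨hq'.ne'⟩
  rw [charSum_eq qh qh' hq hq' m m' 0]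
  refine Finset.sum_eq_zero fun α hα => Finset.sum_eq_zero fun α' hα' => ?_
  rw [if_neg]
  rintro ⟨hc, hc', hdvd⟩
  apply hne
  rw [add_zero] at hdvd
  have main : ∀ (a b : ℕ) (ha : 0 < a) (hb : 0 < b) (x y : ℕ)
      (hx : Nat.Coprime x a) (hy : Nat.Coprime y b)
      (hd : ((a * b : ℕ) : ℤ) ∣ (iv a x * b + iv b y * a)), a ∣ b := by
    intro a b ha hb x y hx hy hd
    haveI : NeZero a := ⟨ha.ne'⟩
    have h1 : (a : ℤ) ∣ iv a x * b := by
      have h2 : (a : ℤ) ∣ iv a x * b + iv b y * a :=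
        dvd_trans (by exact_mod_cast Int.natCast_dvd_natCast.2 (dvd_mul_right a b)) hd
      have h3 : (a : ℤ) ∣ iv b y * a := ⟨iv b y, mul_comm _ _⟩
      have h4 := dvd_sub h2 h3
      rwa [add_sub_cancel_right] at h4
    have h5 : a ∣ ((x : ZMod a)⁻¹).val * b := by
      have : (iv a x * b : ℤ) = ((((x : ZMod a)⁻¹).val * b : ℕ) : ℤ) := by rw [iv]; push_cast; ring
      rw [this] at h1
      exact_mod_cast h1
    exact Nat.Coprime.dvd_of_dvd_mul_left ((iv_coprime hx).symm) h5
  refine Nat.dvd_antisymm (main qh qh' hq hq' α α' hc hc' hdvd) ?_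
  refine main qh' qh hq' hq α' α hc' hc ?_
  rw [show ((qh' * qh : ℕ) : ℤ) = ((qh * qh' : ℕ) : ℤ) by push_cast; ring,
    show iv qh' α' * qh + iv qh α * qh' = iv qh α * qh' + iv qh' α' * qh by ring]
  exact hdvd

lemma charSum_bound (qh qh' : ℕ) (hq : 0 < qh) (hq' : 0 < qh') (m m' n₂ : ℤ) :
    ‖charSum qh qh' m m' n₂‖ ≤
      (qh : ℝ) * (qh' : ℝ) * ((Nat.gcd (Nat.gcd qh qh') n₂.natAbs : ℕ) : ℝ) := by
  rw [charSum_eq qh qh' hq hq' m m' n₂]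
  set P : ℕ × ℕ → Prop := fun p =>
    Nat.Coprime p.1 qh ∧ Nat.Coprime p.2 qh' ∧
      ((qh * qh' : ℕ) : ℤ) ∣ (iv qh p.1 * qh' + iv qh' p.2 * qh + n₂) with hP
  have step1 : ‖∑ α ∈ Finset.range qh, ∑ α' ∈ Finset.range qh',
      if Nat.Coprime α qh ∧ Nat.Coprime α' qh' ∧
          ((qh * qh' : ℕ) : ℤ) ∣ (iv qh α * qh' + iv qh' α' * qh + n₂)
      then ((qh * qh' : ℕ) : ℂ) *
          e2 ((((((m : ZMod qh)⁻¹).val : ℤ) * α : ℤ) : ℝ) / (qh : ℝ)) *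
          e2 ((((((m' : ZMod qh')⁻¹).val : ℤ) * α' : ℤ) : ℝ) / (qh' : ℝ))
      else 0‖ ≤
      ∑ α ∈ Finset.range qh, ∑ α' ∈ Finset.range qh',
        (if P (α, α') then ((qh * qh' : ℕ) : ℝ) else 0) := by
    refine le_trans (norm_sum_le _ _) (Finset.sum_le_sum fun α _ => ?_)
    refine le_trans (norm_sum_le _ _) (Finset.sum_le_sum fun α' _ => ?_)
    by_cases hp : P (α, α')
    · rw [if_pos hp, if_pos hp, norm_mul, norm_mul, e2_abs, e2_abs, mul_one, mul_one,
        Complex.norm_natCast]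
    · rw [if_neg hp, if_neg hp, norm_zero]
  refine le_trans step1 ?_
  rw [← Finset.sum_product']
  rw [← Finset.sum_filter, Finset.sum_const, nsmul_eq_mul]
  have hcard := card_bound qh qh' hq hq' n₂
  calc (((Finset.range qh ×ˢ Finset.range qh').filter P).card : ℝ) * ((qh * qh' : ℕ) : ℝ)
      ≤ ((Nat.gcd (Nat.gcd qh qh') n₂.natAbs : ℕ) : ℝ) * ((qh * qh' : ℕ) : ℝ) := by
        refine mul_le_mul_of_nonneg_right ?_ (by positivity)
        exact_mod_cast hcard
  _ = (qh : ℝ) * (qh' : ℝ) * ((Nat.gcd (Nat.gcd qh qh') n₂.natAbs : ℕ) : ℝ) := by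
        push_cast; ring

/-- `|𝔠| ≤ q̂ q̂' gcd(q̂, q̂', n₂)`; moreover if `n₂ = 0` then `𝔠 = 0` unless `q̂ = q̂'`,
in which case `|𝔠| ≤ q̂ q̂' |c_{q̂}(m − m')|`. -/
theorem stmt_4 (qh qh' : ℕ) (hq : 0 < qh) (hq' : 0 < qh') (m m' n₂ : ℤ)
    (hm : IsCoprime m (qh : ℤ)) (hm' : IsCoprime m' (qh' : ℤ)) :
    ‖charSum qh qh' m m' n₂‖ ≤
      (qh : ℝ) * (qh' : ℝ) * ((Nat.gcd (Nat.gcd qh qh') n₂.natAbs : ℕ) : ℝ) ∧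
    (n₂ = 0 →
      (qh ≠ qh' → charSum qh qh' m m' 0 = 0) ∧
      (qh = qh' → ‖charSum qh qh' m m' 0‖ ≤
        (qh : ℝ) * (qh' : ℝ) * ‖ramanujanSum qh (m - m')‖)) := by
  refine ⟨charSum_bound qh qh' hq hq' m m' n₂, fun _ => ⟨fun hne =>
    charSum_offdiag qh qh' hq hq' m m' hne, fun heq => ?_⟩⟩
  subst heq
  rw [charSum_diag qh hq m m', norm_mul, ram_shift qh hq m m' hm hm', Complex.norm_natCast]
  push_cast
  rw [show (qh : ℝ) * qh * ‖ramanujanSum qh (m - m')‖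
    = (qh : ℝ) * (qh : ℝ) * ‖ramanujanSum qh (m - m')‖ by ring]
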